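/- Projection Lemma: Let H = H₁ + H₂ be a sum of two Hermitian operators on a finite-dimensional Hilbert space S₀ = S ⊕ S^⊥. Assume H₂ S = 0 (S is a zero-eigenspace of H₂) and the smallest eigenvalue of H₂ restricted to S^⊥ is at least J, with J > 2‖H₁‖. Then λ₁(H₁|_S) − ‖H₁‖²/(J − 2‖H₁‖) ≤ λ₁(H) ≤ λ₁(H₁|_S), where λ₁ denotes the smallest eigenvalue. -/

import Mathlib

open scoped InnerProductSpace ComplexConjugate

private lemma proj_arith (lam n1 J a b R1 R2 R3 R4 K : ℝ)
    (hn1 : 0 ≤ n1) (hJ : 2*n1 < J) (hlamn : lam ≤ n1)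
    (hab : a^2+b^2=1) (hb : 0 ≤ b) (ha1 : a ≤ 1)
    (hK : (J-2*n1)*K = n1^2)
    (h1 : lam*a^2 ≤ R1) (h2 : -(n1*a*b) ≤ R2) (h3 : -(n1*b*b) ≤ R3) (h4 : J*b^2 ≤ R4) :
    lam - K ≤ R1 + 2*R2 + R3 + R4 := by
  have hg : 0 < J - 2*n1 := by linarith
  have key : 0 ≤ (J-2*n1)*b^2 - 2*n1*b + K := by
    nlinarith [sq_nonneg ((J-2*n1)*b - n1)]
  have hlb : lam * b^2 ≤ n1 * b^2 := mul_le_mul_of_nonneg_right hlamn (sq_nonneg b)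
  have hnab : n1*a*b ≤ n1*b := by nlinarith [mul_nonneg (mul_nonneg hn1 hb) (sub_nonneg.mpr ha1)]
  have heq : lam*a^2 + lam*b^2 = lam := by linear_combination lam * hab
  nlinarith [key, hlb, hnab, heq]

private lemma rayleigh_abs {E : Type*} [NormedAddCommGroup E] [InnerProductSpace ℂ E]
    (A : E →L[ℂ] E) (x y : E) :
    |((inner ℂ x (A y) : ℂ)).re| ≤ ‖A‖ * ‖x‖ * ‖y‖ := by
  calc |((inner ℂ x (A y) : ℂ)).re| ≤ ‖(inner ℂ x (A y) : ℂ)‖ := Complex.abs_re_le_norm _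
    _ ≤ ‖x‖ * ‖A y‖ := norm_inner_le_norm _ _
    _ ≤ ‖x‖ * (‖A‖ * ‖y‖) := by gcongr; exact A.le_opNorm y
    _ = ‖A‖ * ‖x‖ * ‖y‖ := by ring

/-- Projection Lemma: for `H = H₁ + H₂` with `H₂ S = 0` and `H₂ ≥ J` on `S^⊥`, `J > 2‖H₁‖`:
`λ₁(H₁|_S) − ‖H₁‖²/(J − 2‖H₁‖) ≤ λ₁(H) ≤ λ₁(H₁|_S)`, where minimum eigenvalues of
Hermitian operators are expressed as infima of Rayleigh quotients. -/
theorem projection_lemma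
    {E : Type*} [NormedAddCommGroup E] [InnerProductSpace ℂ E] [FiniteDimensional ℂ E]
    (H1 H2 : E →L[ℂ] E) (hH1 : IsSelfAdjoint H1) (hH2 : IsSelfAdjoint H2)
    (S : Submodule ℂ E) (hS : S ≠ ⊥)
    (J : ℝ) (hJ : 2 * ‖H1‖ < J)
    (hker : ∀ x ∈ S, H2 x = 0)
    (hgap : ∀ x ∈ Sᗮ, J * ‖x‖ ^ 2 ≤ ((inner ℂ x (H2 x) : ℂ)).re) :
    sInf {t : ℝ | ∃ x ∈ S, ‖x‖ = 1 ∧ ((inner ℂ x (H1 x) : ℂ)).re = t}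
        - ‖H1‖ ^ 2 / (J - 2 * ‖H1‖)
      ≤ sInf {t : ℝ | ∃ x : E, ‖x‖ = 1 ∧ ((inner ℂ x ((H1 + H2) x) : ℂ)).re = t} ∧
    sInf {t : ℝ | ∃ x : E, ‖x‖ = 1 ∧ ((inner ℂ x ((H1 + H2) x) : ℂ)).re = t}
      ≤ sInf {t : ℝ | ∃ x ∈ S, ‖x‖ = 1 ∧ ((inner ℂ x (H1 x) : ℂ)).re = t} := by
  have hsym1 := ContinuousLinearMap.isSelfAdjoint_iff_isSymmetric.mp hH1
  have hsym2 := ContinuousLinearMap.isSelfAdjoint_iff_isSymmetric.mp hH2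
  set n1 := ‖H1‖ with hn1
  have hn1n : 0 ≤ n1 := norm_nonneg _
  set TS := {t : ℝ | ∃ x ∈ S, ‖x‖ = 1 ∧ ((inner ℂ x (H1 x) : ℂ)).re = t} with hTSdef
  set T := {t : ℝ | ∃ x : E, ‖x‖ = 1 ∧ ((inner ℂ x ((H1 + H2) x) : ℂ)).re = t} with hTdef
  -- a unit vector in S
  obtain ⟨e0, he0S, he0⟩ := S.ne_bot_iff.mp hS
  set e : E := (‖e0‖⁻¹ : ℂ) • e0 with he_def
  have heS : e ∈ S := S.smul_mem _ he0S
  have he1 : ‖e‖ = 1 := norm_smul_inv_norm he0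
  have hTS_ne : TS.Nonempty := ⟨_, e, heS, he1, rfl⟩
  have hT_ne : T.Nonempty := ⟨_, e, he1, rfl⟩
  have hTS_bdd : BddBelow TS := by
    refine ⟨-n1, fun t ht => ?_⟩
    obtain ⟨x, hxS, hx1, rfl⟩ := ht
    have := rayleigh_abs H1 x x
    rw [hx1] at this
    simp only [mul_one] at this
    linarith [abs_le.mp this |>.1]
  set lam := sInf TS with hlam_def
  have hlam_le_mem : ∀ t ∈ TS, lam ≤ t := fun t ht => csInf_le hTS_bdd ht
  -- lam * ‖u‖² ≤ Re⟪u, H1 u⟫ for u ∈ S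
  have hlam : ∀ u ∈ S, lam * ‖u‖ ^ 2 ≤ ((inner ℂ u (H1 u) : ℂ)).re := by
    intro u huS
    rcases eq_or_ne u 0 with rfl | hu
    · simp
    · set w : E := (‖u‖⁻¹ : ℂ) • u with hw_def
      have hwS : w ∈ S := S.smul_mem _ huS
      have hw1 : ‖w‖ = 1 := norm_smul_inv_norm hu
      have hmem : ((inner ℂ w (H1 w) : ℂ)).re ∈ TS := ⟨w, hwS, hw1, rfl⟩
      have hle := hlam_le_mem _ hmem
      have hcalc : ((inner ℂ w (H1 w) : ℂ)).re = (‖u‖ ^ 2)⁻¹ * ((inner ℂ u (H1 u) : ℂ)).re := by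
        have hc : (inner ℂ w (H1 w) : ℂ) = (((‖u‖ ^ 2)⁻¹ : ℝ) : ℂ) * inner ℂ u (H1 u) := by
          simp only [hw_def, map_smul, inner_smul_left, inner_smul_right, map_inv₀,
            Complex.conj_ofReal]
          push_cast
          ring
        rw [hc, Complex.re_ofReal_mul]
      rw [hcalc] at hle
      have hun : (0:ℝ) < ‖u‖ := norm_pos_iff.mpr hu
      have h2 : lam * ‖u‖ ^ 2 ≤ ((‖u‖ ^ 2)⁻¹ * ((inner ℂ u (H1 u) : ℂ)).re) * ‖u‖ ^ 2 := by
        apply mul_le_mul_of_nonneg_right hle (by positivity)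
      calc lam * ‖u‖ ^ 2 ≤ ((‖u‖ ^ 2)⁻¹ * ((inner ℂ u (H1 u) : ℂ)).re) * ‖u‖ ^ 2 := h2
        _ = ((inner ℂ u (H1 u) : ℂ)).re := by field_simp
  have hlam_le_n1 : lam ≤ n1 := by
    have hmem : ((inner ℂ e (H1 e) : ℂ)).re ∈ TS := ⟨e, heS, he1, rfl⟩
    have := rayleigh_abs H1 e e
    rw [he1] at this
    simp only [mul_one] at this
    linarith [hlam_le_mem _ hmem, abs_le.mp this |>.2]
  have hg : (0:ℝ) < J - 2 * n1 := by linarith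
  -- lower bound for all elements of T
  have hlow : ∀ t ∈ T, lam - n1 ^ 2 / (J - 2 * n1) ≤ t := by
    intro t ht
    obtain ⟨x, hx1, rfl⟩ := ht
    obtain ⟨u, huS, v, hvS, hxuv⟩ := S.exists_add_mem_mem_orthogonal x
    have huv : (inner ℂ u v : ℂ) = 0 := Submodule.inner_right_of_mem_orthogonal huS hvS
    have hnorm : ‖u‖ ^ 2 + ‖v‖ ^ 2 = 1 := by
      have := norm_add_sq (𝕜 := ℂ) u v
      rw [← hxuv, hx1] at this
      simp [huv] at this
      linarith
    have hH2u : H2 u = 0 := hker u huS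
    -- expand inner product
    have hexp : ((inner ℂ x ((H1 + H2) x) : ℂ)).re
        = ((inner ℂ u (H1 u) : ℂ)).re + 2 * ((inner ℂ u (H1 v) : ℂ)).re
          + ((inner ℂ v (H1 v) : ℂ)).re + ((inner ℂ v (H2 v) : ℂ)).re := by
      have h21 : (inner ℂ u (H2 v) : ℂ) = 0 := by
        have := (hsym2 u v).symm
        simp only [ContinuousLinearMap.coe_coe] at this
        rw [this, hH2u, inner_zero_left]
      have hvu : ((inner ℂ v (H1 u) : ℂ)).re = ((inner ℂ u (H1 v) : ℂ)).re := by
        have := hsym1 v u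
        simp only [ContinuousLinearMap.coe_coe] at this
        rw [← this, ← inner_conj_symm (𝕜 := ℂ) u (H1 v), Complex.conj_re]
      rw [hxuv]
      simp only [ContinuousLinearMap.add_apply, map_add, hH2u, zero_add, add_zero,
        inner_add_left, inner_add_right, Complex.add_re, h21]
      rw [hvu]
      linarith
    have h1 := hlam u huS
    have h2 := rayleigh_abs H1 u v
    have h3 := rayleigh_abs H1 v v
    have h4 := hgap v hvS
    have ha : (0:ℝ) ≤ ‖u‖ := norm_nonneg _
    have hb : (0:ℝ) ≤ ‖v‖ := norm_nonneg _
    have ha1 : ‖u‖ ≤ 1 := by nlinarith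
    have hK : (J - 2 * n1) * (n1 ^ 2 / (J - 2 * n1)) = n1 ^ 2 := by
      field_simp
    rw [hexp]
    have h2' : -(n1 * ‖u‖ * ‖v‖) ≤ ((inner ℂ u (H1 v) : ℂ)).re := (abs_le.mp h2).1
    have h3' : -(n1 * ‖v‖ * ‖v‖) ≤ ((inner ℂ v (H1 v) : ℂ)).re := by
      have := (abs_le.mp h3).1
      linarith
    exact proj_arith lam n1 J ‖u‖ ‖v‖ _ _ _ _ _ hn1n hJ hlam_le_n1 hnorm hb ha1 hK h1 h2' h3' h4
  constructor
  · exact le_csInf hT_ne hlow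
  · refine csInf_le_csInf ⟨lam - n1 ^ 2 / (J - 2 * n1), hlow⟩ hTS_ne ?_
    rintro t ⟨x, hxS, hx1, rfl⟩
    refine ⟨x, hx1, ?_⟩
    simp [ContinuousLinearMap.add_apply, hker x hxS]
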